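/- (Rotation symmetry of resonances.) Let C : ℤ → U(2) satisfy the standing Assumption, let U = S∘C, and let k ≥ 1 be an integer such that c₁₂(x) = 0 for every x ∈ ℤ∖kℤ (i.e. supp c₁₂ ⊆ kℤ). Let l ∈ {0, 1, …, 2k−1}, let λ ∈ ℂ∖{0}, and let φ : ℤ → ℂ² be an outgoing map with Uφ = λφ. Define φ'(x) = (e^{ilπx/k} φ^L(x), e^{−ilπx/k} φ^R(x)). Then φ' is outgoing and Uφ' = e^{ilπ/k} λ · φ'. In particular, if λ is a resonance of U then so is e^{ilπ/k}λ. -/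

import Mathlib

noncomputable section

open scoped ComplexConjugate

/-- A state: a map ℤ → ℂ², components `ψ x 0` (left, ψ^L) and `ψ x 1` (right, ψ^R). -/
abbrev QWState := ℤ → Fin 2 → ℂ

/-- The quantum walk operator U = S∘C acting pointwise:
`(Uψ)(x) = ((C(x+1)ψ(x+1))₁, (C(x−1)ψ(x−1))₂)`. -/
def qwalk (C : ℤ → Matrix (Fin 2) (Fin 2) ℂ) (ψ : QWState) : QWState :=
  fun x => ![(C (x + 1)).mulVec (ψ (x + 1)) 0, (C (x - 1)).mulVec (ψ (x - 1)) 1]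

/-- The standing Assumption on the coin. -/
structure CoinAssumption (C : ℤ → Matrix (Fin 2) (Fin 2) ℂ) : Prop where
  unitary : ∀ x, C x ∈ Matrix.unitaryGroup (Fin 2) ℂ
  d11 : ∀ x, C x 0 0 ≠ 0
  d22 : ∀ x, C x 1 1 ≠ 0
  fin : Set.Finite {x : ℤ | C x ≠ 1}

/-- Outgoing: ψ^L vanishes far right, ψ^R vanishes far left. -/
def Outgoing (ψ : QWState) : Prop :=
  ∃ r : ℤ, 0 < r ∧ ∀ x : ℤ, r < x → ψ x 0 = 0 ∧ ψ (-x) 1 = 0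

/-- Rotation symmetry of resonances: if supp c₁₂ ⊆ kℤ and Uφ = λφ with φ outgoing, then
φ'(x) = (e^{ilπx/k}φ^L(x), e^{−ilπx/k}φ^R(x)) is outgoing and Uφ' = e^{ilπ/k}λφ'. -/
theorem rotation_symmetry_of_resonances
    (C : ℤ → Matrix (Fin 2) (Fin 2) ℂ) (hC : CoinAssumption C)
    (k : ℕ) (hk : 1 ≤ k)
    (hsupp : ∀ x : ℤ, ¬ ((k : ℤ) ∣ x) → C x 0 1 = 0)
    (l : ℕ) (hl : l ≤ 2 * k - 1)
    (lam : ℂ) (hlam : lam ≠ 0)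
    (φ : QWState) (hout : Outgoing φ)
    (heig : ∀ x : ℤ, ∀ i : Fin 2, qwalk C φ x i = lam * φ x i)
    (φ' : QWState)
    (hφ' : ∀ x : ℤ,
      φ' x = ![Complex.exp ((l : ℂ) * Real.pi * (x : ℂ) * Complex.I / (k : ℂ)) * φ x 0,
               Complex.exp (-((l : ℂ) * Real.pi * (x : ℂ) * Complex.I / (k : ℂ))) * φ x 1]) :
    Outgoing φ' ∧
      ∀ x : ℤ, ∀ i : Fin 2,
        qwalk C φ' x i = Complex.exp ((l : ℂ) * Real.pi * Complex.I / (k : ℂ)) * lam * φ' x i := by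
  have hk0 : (k : ℂ) ≠ 0 := by
    exact Nat.cast_ne_zero.mpr (Nat.one_le_iff_ne_zero.mp hk)
  set θ : ℤ → ℂ := fun x => (l : ℂ) * Real.pi * (x : ℂ) * Complex.I / (k : ℂ) with hθ
  -- step relation
  have hstep : ∀ x : ℤ, θ (x + 1) = θ x + (l : ℂ) * Real.pi * Complex.I / (k : ℂ) := by
    intro x
    simp only [hθ]
    push_cast
    ring
  -- symmetry on kℤ
  have hsym : ∀ m : ℤ, (k : ℤ) ∣ m → Complex.exp (-(θ m)) = Complex.exp (θ m) := by
    intro m ⟨j, hj⟩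
    have : -(θ m) = θ m + (-(l * j) : ℤ) * (2 * Real.pi * Complex.I) := by
      simp only [hθ, hj]
      push_cast
      field_simp
      ring
    rw [this, Complex.exp_add, Complex.exp_int_mul_two_pi_mul_I, mul_one]
  -- c21 vanishes when c12 does
  have hc21 : ∀ x : ℤ, C x 0 1 = 0 → C x 1 0 = 0 := by
    intro x h01
    have hu : star (C x) * C x = 1 := (Matrix.mem_unitaryGroup_iff'.mp (hC.unitary x))
    have h := congrArg (fun M => M 0 1) hu
    simp only [Matrix.mul_apply, Fin.sum_univ_two, Matrix.star_apply,
      Matrix.one_apply, Matrix.conjTranspose_apply] at h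
    rw [h01, mul_zero, zero_add] at h
    simp only [Fin.zero_eq_one_iff, Nat.reduceEqDiff, if_false] at h
    rcases mul_eq_zero.mp h with h' | h'
    · exact (star_eq_zero.mp h')
    · exact absurd h' (hC.d22 x)
  constructor
  · obtain ⟨r, hr, hv⟩ := hout
    refine ⟨r, hr, fun x hx => ?_⟩
    obtain ⟨h0, h1⟩ := hv x hx
    constructor
    · rw [hφ' x]; simp [h0]
    · rw [hφ' (-x)]; simp [h1]
  · intro x i
    fin_cases i
    · -- left component
      have key : C (x+1) 0 1 * Complex.exp (-(θ (x+1))) = C (x+1) 0 1 * Complex.exp (θ (x+1)) := by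
        by_cases h : (k : ℤ) ∣ (x + 1)
        · rw [hsym _ h]
        · rw [hsupp _ h, zero_mul, zero_mul]
      have he := heig x 0
      simp only [qwalk, Matrix.cons_val_zero, Matrix.mulVec, dotProduct,
        Fin.sum_univ_two] at he ⊢
      rw [hφ' (x+1), hφ' x]
      simp only [Matrix.cons_val_zero, Matrix.cons_val_one, Matrix.head_cons]
      calc C (x+1) 0 0 * (Complex.exp (θ (x+1)) * φ (x+1) 0)
            + C (x+1) 0 1 * (Complex.exp (-(θ (x+1))) * φ (x+1) 1)
          = Complex.exp (θ (x+1)) *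
              (C (x+1) 0 0 * φ (x+1) 0 + C (x+1) 0 1 * φ (x+1) 1) := by
            rw [← mul_assoc (C (x+1) 0 1), key]; ring
        _ = Complex.exp (θ (x+1)) * (lam * φ x 0) := by rw [he]
        _ = Complex.exp ((l : ℂ) * Real.pi * Complex.I / (k : ℂ)) * lam *
              (Complex.exp (θ x) * φ x 0) := by
            rw [hstep, Complex.exp_add]; ring
    · -- right component
      have key : C (x-1) 1 0 * Complex.exp (θ (x-1)) = C (x-1) 1 0 * Complex.exp (-(θ (x-1))) := by
        by_cases h : (k : ℤ) ∣ (x - 1)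
        · rw [hsym _ h]
        · rw [hc21 _ (hsupp _ h), zero_mul, zero_mul]
      have he := heig x 1
      simp only [qwalk, Matrix.cons_val_one, Matrix.head_cons, Matrix.mulVec,
        dotProduct, Fin.sum_univ_two] at he ⊢
      rw [hφ' (x-1), hφ' x]
      simp only [Matrix.cons_val_zero, Matrix.cons_val_one, Matrix.head_cons]
      have hstep' : -(θ x) + (l : ℂ) * Real.pi * Complex.I / (k : ℂ) = -(θ (x - 1)) := by
        have := hstep (x - 1)
        rw [sub_add_cancel] at this
        rw [this]; ring
      calc C (x-1) 1 0 * (Complex.exp (θ (x-1)) * φ (x-1) 0)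
            + C (x-1) 1 1 * (Complex.exp (-(θ (x-1))) * φ (x-1) 1)
          = Complex.exp (-(θ (x-1))) *
              (C (x-1) 1 0 * φ (x-1) 0 + C (x-1) 1 1 * φ (x-1) 1) := by
            rw [← mul_assoc (C (x-1) 1 0), key]; ring
        _ = Complex.exp (-(θ (x-1))) * (lam * φ x 1) := by exact congrArg (Complex.exp (-(θ (x-1))) * ·) he
        _ = Complex.exp ((l : ℂ) * Real.pi * Complex.I / (k : ℂ)) * lam *
              (Complex.exp (-(θ x)) * φ x 1) := by
            rw [← hstep', Complex.exp_add]; ring
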